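/- Let A = {a₁,…,aₙ}, let B be a finite alphabet with A ⊆ B and B disjoint from {x,y}, and let φ : A* → {x,y}* be the monoid homomorphism determined by φ(aᵢ) = x x yⁱ x y^{n+1−i}. Let Q be a rewriting system on B, and let E = { (φ(a), a) : a ∈ A }, a rewriting system on the alphabet {x,y} ∪ B. Then the rewriting system (B, Q) is complete (terminating and confluent) if and only if the rewriting system ({x,y} ∪ B, Q ∪ E) is complete. -/

import Mathlib

/-- The two-letter alphabet `{x, y}`. -/
inductive XY : Type
  | x : XY
  | y : XY

open XY

/-- Single-step reduction of a string rewriting system `R`: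
`u →_R v` iff `u = xℓy` and `v = xry` for some rule `(ℓ, r) ∈ R`. -/
def Step {α : Type*} (R : Set (List α × List α)) (u v : List α) : Prop :=
  ∃ x y l r, (l, r) ∈ R ∧ u = x ++ l ++ y ∧ v = x ++ r ++ y

/-- A rewriting system is terminating if there is no infinite reduction
sequence. -/
def Terminating {α : Type*} (R : Set (List α × List α)) : Prop :=
  ¬ ∃ f : ℕ → List α, ∀ n : ℕ, Step R (f n) (f (n + 1))

/-- A rewriting system is confluent if any two reductions of a common word
can be joined. -/
def Confluent {α : Type*} (R : Set (List α × List α)) : Prop :=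
  ∀ u v w : List α, Relation.ReflTransGen (Step R) u v →
    Relation.ReflTransGen (Step R) u w →
    ∃ z : List α, Relation.ReflTransGen (Step R) v z ∧
      Relation.ReflTransGen (Step R) w z

/-- The image of the letter `aᵢ` (for `i ∈ {1, …, n}`, encoded as `i : Fin n`
representing `a_{i+1}`): `φ(aᵢ) = x x yⁱ x y^{n+1−i}`. -/
def code (n : ℕ) (i : Fin n) : List XY :=
  [x, x] ++ List.replicate (i.val + 1) y ++ [x] ++ List.replicate (n - i.val) y

lemma noEmpty {α : Type*} {R : Set (List α × List α)} (hT : Terminating R) {r : List α}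
    (h : ([], r) ∈ R) : False := by
  apply hT
  refine ⟨fun k => (List.replicate k r).flatten, fun k => ?_⟩
  exact ⟨[], (List.replicate k r).flatten, [], r, h, by simp,
    by simp [List.replicate_succ]⟩

lemma term_wf {α : Type*} {R : Set (List α × List α)} (hT : Terminating R) :
    WellFounded (fun a b => Step R b a) := by
  classical
  by_contra hwf
  apply hT
  have hex : ∃ a, ¬ Acc (fun a b => Step R b a) a := by
    by_contra h; push_neg at h; exact hwf ⟨h⟩
  have key : ∀ a, ¬ Acc (fun a b => Step R b a) a →
      ∃ b, Step R a b ∧ ¬ Acc (fun a b => Step R b a) b := by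
    intro a ha
    by_contra hb; push_neg at hb
    exact ha (Acc.intro a fun y hy => hb y hy)
  obtain ⟨a0, ha0⟩ := hex
  choose g hg1 hg2 using key
  let F : ℕ → {a : List α // ¬ Acc (fun a b => Step R b a) a} :=
    fun k => Nat.rec ⟨a0, ha0⟩ (fun _ p => ⟨g p.1 p.2, hg2 p.1 p.2⟩) k
  exact ⟨fun k => (F k).1, fun k => hg1 (F k).1 (F k).2⟩

lemma newman {α : Type*} {r : α → α → Prop} (wf : WellFounded (fun a b => r b a))
    (lc : ∀ u v w, r u v → r u w → ∃ z, Relation.ReflTransGen r v z ∧ Relation.ReflTransGen r w z) :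
    ∀ u v w, Relation.ReflTransGen r u v → Relation.ReflTransGen r u w →
      ∃ z, Relation.ReflTransGen r v z ∧ Relation.ReflTransGen r w z := by
  intro u
  induction u using WellFounded.induction wf with
  | _ u ih =>
    intro v w huv huw
    rcases huv.cases_head with rfl | ⟨v1, huv1, hv1v⟩
    · exact ⟨w, huw, .refl⟩
    rcases huw.cases_head with rfl | ⟨w1, huw1, hw1w⟩
    · exact ⟨v, .refl, huv⟩
    obtain ⟨z1, hvz1, hwz1⟩ := lc u v1 w1 huv1 huw1
    obtain ⟨z2, hvz2, hz1z2⟩ := ih v1 huv1 v z1 hv1v hvz1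
    obtain ⟨z3, hwz3, hz2z3⟩ := ih w1 huw1 w z2 hw1w (hwz1.trans hz1z2)
    exact ⟨z3, hvz2.trans hz2z3, hwz3⟩


lemma code_eq (n : ℕ) (i : Fin n) :
    code n i = x :: x :: (List.replicate (i.val + 1) y ++ x :: List.replicate (n - i.val) y) := by
  simp [code]

lemma code_length (n : ℕ) (i : Fin n) : (code n i).length = n + 4 := by
  have := i.isLt
  simp [code]
  omega

lemma code_ne_nil (n : ℕ) (i : Fin n) : code n i ≠ [] := by
  rw [code_eq]; simp

lemma no_xx : ∀ (a : ℕ) {b : ℕ}, 1 ≤ b → ∀ (P Z : List XY),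
    List.replicate a y ++ x :: List.replicate b y ≠ P ++ x :: x :: Z := by
  intro a
  induction a with
  | zero =>
    intro b hb P Z h
    simp only [List.replicate_zero, List.nil_append] at h
    match P, h with
    | [], h =>
      simp only [List.nil_append, List.cons.injEq] at h
      have hx : x ∈ List.replicate b y := by rw [h.2]; exact List.mem_cons_self
      exact XY.noConfusion (List.eq_of_mem_replicate hx)
    | q :: P', h =>
      simp only [List.cons_append, List.cons.injEq] at h
      have hx : x ∈ List.replicate b y := by rw [h.2]; simp
      exact XY.noConfusion (List.eq_of_mem_replicate hx)
  | succ a ih =>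
    intro b hb P Z h
    rw [List.replicate_succ, List.cons_append] at h
    match P, h with
    | [], h => exact XY.noConfusion (List.head_eq_of_cons_eq h).symm
    | q :: P', h =>
      rw [List.cons_append] at h
      exact ih hb P' Z (List.tail_eq_of_cons_eq h)

lemma ya_head : ∀ (a : ℕ) (b : ℕ) (u v : List XY),
    List.replicate a y ++ x :: u = List.replicate b y ++ x :: v → a = b := by
  intro a
  induction a with
  | zero =>
    intro b u v h
    cases b with
    | zero => rfl
    | succ b =>
      rw [List.replicate_succ, List.cons_append] at h
      simp only [List.replicate_zero, List.nil_append] at h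
      exact absurd (List.head_eq_of_cons_eq h) (by simp)
  | succ a ih =>
    intro b u v h
    cases b with
    | zero =>
      rw [List.replicate_succ, List.cons_append] at h
      simp only [List.replicate_zero, List.nil_append] at h
      exact absurd (List.head_eq_of_cons_eq h) (by simp)
    | succ b =>
      rw [List.replicate_succ, List.cons_append, List.replicate_succ, List.cons_append] at h
      exact congrArg Nat.succ (ih b u v (List.tail_eq_of_cons_eq h))

lemma code_inj {n : ℕ} {i j : Fin n} (h : code n i = code n j) : i = j := by
  rw [code_eq, code_eq] at h
  have h2 := List.tail_eq_of_cons_eq (List.tail_eq_of_cons_eq h)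
  have := ya_head _ _ _ _ h2
  exact Fin.ext (by omega)

lemma code_overlap {n : ℕ} {i j : Fin n} {P S T : List XY} (hS : S ≠ [])
    (h1 : code n i = P ++ S) (h2 : code n j = S ++ T) : P = [] := by
  rw [code_eq] at h1 h2
  match S, hS with
  | s1 :: S', _ =>
  rw [List.cons_append] at h2
  have hs1 : s1 = x := by injection h2 with h2a _; exact h2a.symm
  subst hs1
  match P with
  | [] => rfl
  | p1 :: P' =>
    exfalso
    rw [List.cons_append] at h1
    have hp1 : p1 = x := by injection h1 with h1a _; exact h1a.symm
    subst hp1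
    have h1b := List.tail_eq_of_cons_eq h1
    match S' with
    | [] =>
      obtain ⟨b, hb⟩ : ∃ b, n - i.val = b + 1 := ⟨n - i.val - 1, by have := i.isLt; omega⟩
      rw [hb] at h1b
      nth_rewrite 2 [List.replicate_succ'] at h1b
      have h1c : (x :: (List.replicate (i.val + 1) y ++ x :: List.replicate b y)) ++ [y]
          = P' ++ [x] := by rw [← h1b]; simp
      have := (List.append_inj' h1c (by simp)).2
      simp at this
    | s2 :: S'' =>
      have hs2 : s2 = x := by
        have h2b := List.tail_eq_of_cons_eq h2
        rw [List.cons_append] at h2b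
        injection h2b with h2c _; exact h2c.symm
      subst hs2
      match P', h1b with
      | [], h1b =>
        have h1c := List.tail_eq_of_cons_eq h1b
        rw [List.replicate_succ, List.cons_append] at h1c
        exact XY.noConfusion (List.head_eq_of_cons_eq h1c)
      | q :: P'', h1b =>
        rw [List.cons_append] at h1b
        have h1c := List.tail_eq_of_cons_eq h1b
        exact no_xx (i.val + 1) (b := n - i.val) (by have := i.isLt; omega) P'' S'' h1c


section Main

variable {B : Type*}

def QL (Q : Set (List B × List B)) : Set (List (XY ⊕ B) × List (XY ⊕ B)) :=
  {q | ∃ p ∈ Q, q = (p.1.map Sum.inr, p.2.map Sum.inr)}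

def EL (n : ℕ) (incl : Fin n → B) : Set (List (XY ⊕ B) × List (XY ⊕ B)) :=
  {q | ∃ i : Fin n, q = ((code n i).map Sum.inl, [Sum.inr (incl i)])}

variable {n : ℕ} {incl : Fin n → B} {Q : Set (List B × List B)}

lemma step_lift {a b : List B} (h : Step Q a b) :
    Step (QL Q ∪ EL n incl) (a.map Sum.inr) (b.map Sum.inr) := by
  obtain ⟨u, v, l, r, hr, ha, hb⟩ := h
  exact ⟨u.map Sum.inr, v.map Sum.inr, l.map Sum.inr, r.map Sum.inr,
    Or.inl ⟨(l, r), hr, rfl⟩, by simp [ha], by simp [hb]⟩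

lemma step_ctx {a b : List B} (h : Step Q a b) (c d : List (XY ⊕ B)) :
    Step (QL Q ∪ EL n incl) (c ++ a.map Sum.inr ++ d) (c ++ b.map Sum.inr ++ d) := by
  obtain ⟨u, v, l, r, hr, ha, hb⟩ := h
  refine ⟨c ++ u.map Sum.inr, v.map Sum.inr ++ d, l.map Sum.inr, r.map Sum.inr,
    Or.inl ⟨(l, r), hr, rfl⟩, ?_, ?_⟩ <;> simp [ha, hb, List.append_assoc]

lemma rtg_ctx {a b : List B} (h : Relation.ReflTransGen (Step Q) a b) (c d : List (XY ⊕ B)) :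
    Relation.ReflTransGen (Step (QL Q ∪ EL n incl))
      (c ++ a.map Sum.inr ++ d) (c ++ b.map Sum.inr ++ d) :=
  Relation.ReflTransGen.lift (fun t => c ++ t.map Sum.inr ++ d)
    (fun _ _ hs => step_ctx hs c d) _ _ h

def proj : List (XY ⊕ B) → List B := fun u => u.filterMap Sum.getRight?

def cntL : List (XY ⊕ B) → ℕ := fun u => u.countP (fun a => a.isLeft)

lemma cntL_append (u v : List (XY ⊕ B)) : cntL (u ++ v) = cntL u + cntL v :=
  List.countP_append

lemma cntL_inr (a : List B) : cntL (a.map Sum.inr) = 0 := by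
  simp [cntL, List.countP_map, Function.comp_def]

lemma cntL_inl (a : List XY) : cntL (a.map (Sum.inl : XY → XY ⊕ B)) = a.length := by
  induction a with
  | nil => rfl
  | cons h t ih =>
    simp only [List.map_cons, cntL, List.countP_cons, List.length_cons] at ih ⊢
    simp [ih]

lemma proj_append (u v : List (XY ⊕ B)) : proj (u ++ v) = proj u ++ proj v :=
  List.filterMap_append

lemma proj_inr (a : List B) : proj (a.map Sum.inr) = a := by
  simp [proj, List.filterMap_map, Function.comp_def]

lemma proj_inl (a : List XY) : proj (a.map (Sum.inl : XY → XY ⊕ B)) = [] := by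
  induction a with
  | nil => rfl
  | cons h t ih => simpa [proj, List.filterMap_cons] using ih

lemma step_cases {u v : List (XY ⊕ B)} (h : Step (QL Q ∪ EL n incl) u v) :
    (Step Q (proj u) (proj v) ∧ cntL v = cntL u) ∨ cntL v < cntL u := by
  obtain ⟨c, d, l, r, hr, hu, hv⟩ := h
  rcases hr with ⟨⟨l0, r0⟩, hq, heq⟩ | ⟨i, heq⟩
  · simp only [Prod.mk.injEq] at heq
    obtain ⟨rfl, rfl⟩ := heq
    left
    constructor
    · exact ⟨proj c, proj d, l0, r0, hq,
        by simp [hu, proj_append, proj_inr],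
        by simp [hv, proj_append, proj_inr]⟩
    · simp [hu, hv, cntL_append, cntL_inr]
  · simp only [Prod.mk.injEq] at heq
    obtain ⟨rfl, rfl⟩ := heq
    right
    rw [hu, hv, cntL_append, cntL_append, cntL_append, cntL_append, cntL_inl, code_length]
    have : cntL ([Sum.inr (incl i)] : List (XY ⊕ B)) = 0 := cntL_inr [incl i]
    omega

lemma term_forward (hTQ : Terminating Q) : Terminating (QL Q ∪ EL n incl) := by
  rintro ⟨f, hf⟩
  have mono : Antitone (fun k => cntL (f k)) := antitone_nat_of_succ_le (fun k => by
    rcases step_cases (hf k) with ⟨_, h⟩ | h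
    · exact h.le
    · exact h.le)
  obtain ⟨N, hN⟩ := Nat.sInf_mem (Set.range_nonempty (fun k => cntL (f k)))
  apply hTQ
  refine ⟨fun k => proj (f (N + k)), fun k => ?_⟩
  rcases step_cases (hf (N + k)) with ⟨hs, _⟩ | hlt
  · exact hs
  · exfalso
    have h2 : sInf (Set.range (fun k => cntL (f k))) ≤ cntL (f (N + k + 1)) :=
      Nat.sInf_le ⟨N + k + 1, rfl⟩
    have h3 : cntL (f (N + k)) ≤ cntL (f N) := mono (show N ≤ N + k by omega)
    simp only at hN
    omega

lemma step_of_inr {u0 : List B} {v : List (XY ⊕ B)}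
    (h : Step (QL Q ∪ EL n incl) (u0.map Sum.inr) v) :
    ∃ v0, v = v0.map Sum.inr ∧ Step Q u0 v0 := by
  obtain ⟨c, d, l, r, hr, hu, hv⟩ := h
  rcases hr with ⟨⟨l0, r0⟩, hq, heq⟩ | ⟨i, heq⟩
  · simp only [Prod.mk.injEq] at heq
    obtain ⟨rfl, rfl⟩ := heq
    rw [List.append_assoc] at hu
    obtain ⟨a1, a2, rfl, h1, h2⟩ := List.map_eq_append_iff.mp hu
    obtain ⟨a3, a4, rfl, h3, h4⟩ := List.map_eq_append_iff.mp h2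
    have ha3 : a3 = l0 := List.map_injective_iff.mpr Sum.inr_injective h3
    refine ⟨a1 ++ r0 ++ a4, ?_, a1, a4, l0, r0, hq, by rw [ha3, List.append_assoc], rfl⟩
    rw [hv, ← h1, ← h4]
    simp [List.append_assoc]
  · simp only [Prod.mk.injEq] at heq
    obtain ⟨rfl, rfl⟩ := heq
    exfalso
    have hx : Sum.inl XY.x ∈ u0.map Sum.inr := by
      rw [hu, code_eq]; simp
    simp at hx

lemma rtg_of_inr {u0 : List B} {v : List (XY ⊕ B)}
    (h : Relation.ReflTransGen (Step (QL Q ∪ EL n incl)) (u0.map Sum.inr) v) :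
    ∃ v0, v = v0.map Sum.inr ∧ Relation.ReflTransGen (Step Q) u0 v0 := by
  induction h with
  | refl => exact ⟨u0, rfl, .refl⟩
  | tail _ hbc ih =>
    obtain ⟨b0, rfl, hb⟩ := ih
    obtain ⟨c0, rfl, hc⟩ := step_of_inr hbc
    exact ⟨c0, rfl, hb.tail hc⟩

lemma lhs_ne (hTQ : Terminating Q) {l r : List (XY ⊕ B)}
    (m : (l, r) ∈ QL Q ∪ EL n incl) : l ≠ [] := by
  rcases m with ⟨⟨l0, r0⟩, hq, heq⟩ | ⟨i, heq⟩ <;> simp only [Prod.mk.injEq] at heq <;>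
    obtain ⟨rfl, rfl⟩ := heq
  · intro h
    rw [List.map_eq_nil_iff] at h
    subst h
    exact noEmpty hTQ hq
  · simp [code_ne_nil]


lemma lc_aux (hTQ : Terminating Q) (hCQ : Confluent Q)
    {x1 y1 l1 r1 x2 y2 l2 r2 : List (XY ⊕ B)}
    (m1 : (l1, r1) ∈ QL Q ∪ EL n incl) (m2 : (l2, r2) ∈ QL Q ∪ EL n incl)
    (heq : x1 ++ l1 ++ y1 = x2 ++ l2 ++ y2)
    (hlen : x1.length ≤ x2.length) :
    ∃ z, Relation.ReflTransGen (Step (QL Q ∪ EL n incl)) (x1 ++ r1 ++ y1) z ∧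
      Relation.ReflTransGen (Step (QL Q ∪ EL n incl)) (x2 ++ r2 ++ y2) z := by
  obtain ⟨p, rfl⟩ : x1 <+: x2 :=
    List.prefix_of_prefix_length_le ⟨l1 ++ y1, by rw [← List.append_assoc, heq]⟩
      ⟨l2 ++ y2, by rw [← List.append_assoc]⟩ hlen
  have h2 : l1 ++ y1 = p ++ (l2 ++ y2) := by
    simp only [List.append_assoc] at heq
    exact List.append_cancel_left heq
  rcases le_or_gt l1.length p.length with hd | ho
  · -- disjoint case
    obtain ⟨mm, rfl⟩ : l1 <+: p :=
      List.prefix_of_prefix_length_le ⟨y1, h2⟩ ⟨l2 ++ y2, rfl⟩ hd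
    have h3 : y1 = mm ++ (l2 ++ y2) := by
      rw [List.append_assoc] at h2
      exact List.append_cancel_left h2
    refine ⟨x1 ++ r1 ++ (mm ++ (r2 ++ y2)), Relation.ReflTransGen.single ?_,
      Relation.ReflTransGen.single ?_⟩
    · exact ⟨x1 ++ r1 ++ mm, y2, l2, r2, m2, by rw [h3]; simp [List.append_assoc],
        by simp [List.append_assoc]⟩
    · exact ⟨x1, mm ++ (r2 ++ y2), l1, r1, m1, by simp [List.append_assoc], rfl⟩
  · -- overlap case
    obtain ⟨s, rfl⟩ : p <+: l1 :=
      List.prefix_of_prefix_length_le ⟨l2 ++ y2, h2.symm⟩ ⟨y1, rfl⟩ ho.le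
    have hs : s ≠ [] := by
      rintro rfl
      simp at ho
    have h3 : s ++ y1 = l2 ++ y2 := by
      rw [List.append_assoc] at h2
      exact List.append_cancel_left h2
    rcases m1 with ⟨⟨l10, r10⟩, hq1, heq1⟩ | ⟨i, heq1⟩ <;>
      rcases m2 with ⟨⟨l20, r20⟩, hq2, heq2⟩ | ⟨j, heq2⟩ <;>
      simp only [Prod.mk.injEq] at heq1 heq2 <;>
      obtain ⟨heq1a, rfl⟩ := heq1 <;> obtain ⟨heq2a, rfl⟩ := heq2
    · -- Q/Q overlap
      obtain ⟨p0, s0, hl10, hp0, hs0⟩ := List.map_eq_append_iff.mp heq1a.symm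
      rcases le_or_gt s.length l2.length with hsl | hsl
      · obtain ⟨t, ht⟩ : s <+: l2 :=
          List.prefix_of_prefix_length_le ⟨y1, h3⟩ ⟨y2, rfl⟩ hsl
        obtain ⟨s0', t0, hl20, hs0', ht0⟩ :=
          List.map_eq_append_iff.mp (heq2a.symm.trans ht.symm)
        have hss : s0 = s0' :=
          List.map_injective_iff.mpr Sum.inr_injective (hs0.trans hs0'.symm)
        have h4 : y1 = t ++ y2 := by
          rw [← ht, List.append_assoc] at h3
          exact List.append_cancel_left h3
        have st1 : Step Q (p0 ++ s0 ++ t0) (r10 ++ t0) :=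
          ⟨[], t0, l10, r10, hq1, by simp [hl10, List.append_assoc], by simp⟩
        have st2 : Step Q (p0 ++ s0 ++ t0) (p0 ++ r20) :=
          ⟨p0, [], l20, r20, hq2, by simp [hl20, hss, List.append_assoc], by simp⟩
        obtain ⟨z0, hz1, hz2⟩ := hCQ _ _ _ (Relation.ReflTransGen.single st1)
          (Relation.ReflTransGen.single st2)
        refine ⟨x1 ++ z0.map Sum.inr ++ y2, ?_, ?_⟩
        · have hv : x1 ++ r10.map Sum.inr ++ y1
              = x1 ++ (r10 ++ t0).map Sum.inr ++ y2 := by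
            rw [h4, ← ht0]
            simp [List.append_assoc]
          rw [hv]
          exact rtg_ctx hz1 x1 y2
        · have hw : (x1 ++ p) ++ r20.map Sum.inr ++ y2
              = x1 ++ (p0 ++ r20).map Sum.inr ++ y2 := by
            rw [← hp0]
            simp [List.append_assoc]
          rw [hw]
          exact rtg_ctx hz2 x1 y2
      · obtain ⟨t, ht⟩ : l2 <+: s :=
          List.prefix_of_prefix_length_le ⟨y2, h3.symm⟩ ⟨y1, rfl⟩ hsl.le
        have h4 : y2 = t ++ y1 := by
          rw [← ht, List.append_assoc] at h3
          exact (List.append_cancel_left h3).symm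
        obtain ⟨s0a, t0, hsplit, hs0a, ht0⟩ :=
          List.map_eq_append_iff.mp (hs0.trans (by rw [← ht]))
        have hs0a' : s0a = l20 :=
          List.map_injective_iff.mpr Sum.inr_injective (hs0a.trans heq2a)
        have st1 : Step Q l10 r10 := ⟨[], [], l10, r10, hq1, by simp, by simp⟩
        have st2 : Step Q l10 (p0 ++ (r20 ++ t0)) :=
          ⟨p0, t0, l20, r20, hq2, by rw [hl10, hsplit, hs0a']; simp [List.append_assoc],
            by simp [List.append_assoc]⟩
        obtain ⟨z0, hz1, hz2⟩ := hCQ _ _ _ (Relation.ReflTransGen.single st1)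
          (Relation.ReflTransGen.single st2)
        refine ⟨x1 ++ z0.map Sum.inr ++ y1, ?_, ?_⟩
        · exact rtg_ctx hz1 x1 y1
        · have hw : (x1 ++ p) ++ r20.map Sum.inr ++ y2
              = x1 ++ (p0 ++ (r20 ++ t0)).map Sum.inr ++ y1 := by
            rw [h4, ← hp0, ← ht0]
            simp [List.append_assoc]
          rw [hw]
          exact rtg_ctx hz2 x1 y1
    · -- Q/E overlap: impossible
      exfalso
      cases s with
      | nil => exact hs rfl
      | cons σ s' =>
        simp only [code_eq, List.map_cons, List.cons_append] at h3 heq2a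
        rw [heq2a] at h3
        injection h3 with hσ _
        have hmem : σ ∈ List.map (Sum.inr : B → XY ⊕ B) l10 := by
          rw [← heq1a]; simp
        rw [hσ] at hmem
        simp at hmem
    · -- E/Q overlap: impossible
      exfalso
      cases l20 with
      | nil => exact noEmpty hTQ hq2
      | cons b l20' =>
        cases s with
        | nil => exact hs rfl
        | cons σ s' =>
          simp only [List.map_cons, List.cons_append] at h3 heq2a
          rw [heq2a] at h3
          injection h3 with hσ _
          have hmem : σ ∈ List.map (Sum.inl : XY → XY ⊕ B) (code n i) := by
            rw [← heq1a]; simp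
          rw [hσ] at hmem
          simp at hmem
    · -- E/E overlap: same redex
      obtain ⟨P, S, hPS, hP, hS⟩ := List.map_eq_append_iff.mp heq1a.symm
      have hSne : S ≠ [] := by
        rintro rfl
        exact hs hS.symm
      have hslen : s.length ≤ l2.length := by
        have e1 : (p ++ s).length = n + 4 := by
          rw [heq1a]; simp [code_length]
        have e2 : l2.length = n + 4 := by
          rw [heq2a]; simp [code_length]
        simp only [List.length_append] at e1
        omega
      obtain ⟨t, ht⟩ : s <+: l2 :=
        List.prefix_of_prefix_length_le ⟨y1, h3⟩ ⟨y2, rfl⟩ hslen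
      obtain ⟨S', T, hjj, hS', hT⟩ :=
        List.map_eq_append_iff.mp (heq2a.symm.trans ht.symm)
      have hSS : S = S' :=
        List.map_injective_iff.mpr Sum.inl_injective (hS.trans hS'.symm)
      have hP0 : P = [] := code_overlap hSne hPS (hSS ▸ hjj)
      subst hP0
      have hp0 : p = [] := by simpa using hP.symm
      subst hp0
      simp only [List.nil_append] at hPS
      have hT0 : T = [] := by
        have e1 := congrArg List.length hjj
        have e2 := congrArg List.length hPS
        rw [code_length] at e1 e2
        rw [List.length_append, ← hSS, ← e2] at e1
        have : T.length = 0 := by omega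
        exact List.length_eq_zero_iff.mp this
      subst hT0
      have hj2 : code n j = S := by simpa [hSS] using hjj
      have hij : i = j := code_inj (hPS.trans hj2.symm)
      subst hij
      have htnil : t = [] := by simp [← hT]
      have hl2 : l2 = s := by rw [← ht, htnil, List.append_nil]
      have hy : y1 = y2 := by
        rw [hl2] at h3
        exact List.append_cancel_left h3
      refine ⟨x1 ++ [Sum.inr (incl i)] ++ y1, Relation.ReflTransGen.refl, ?_⟩
      simp only [List.append_nil, hy]
      exact Relation.ReflTransGen.refl
end Main

lemma local_conf {B : Type*} {n : ℕ} {incl : Fin n → B} {Q : Set (List B × List B)}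
    (hTQ : Terminating Q) (hCQ : Confluent Q) :
    ∀ u v w, Step (QL Q ∪ EL n incl) u v → Step (QL Q ∪ EL n incl) u w →
      ∃ z, Relation.ReflTransGen (Step (QL Q ∪ EL n incl)) v z ∧
        Relation.ReflTransGen (Step (QL Q ∪ EL n incl)) w z := by
  rintro u v w ⟨x1, y1, l1, r1, m1, hu1, rfl⟩ ⟨x2, y2, l2, r2, m2, hu2, rfl⟩
  rcases le_total x1.length x2.length with h | h
  · exact lc_aux hTQ hCQ m1 m2 (hu1.symm.trans hu2) h
  · obtain ⟨z, hz1, hz2⟩ := lc_aux hTQ hCQ m2 m1 (hu2.symm.trans hu1) h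
    exact ⟨z, hz2, hz1⟩

/-- Let `A = {a₁,…,aₙ} ⊆ B` (with `B` disjoint from `{x,y}`, realized by the
sum type `XY ⊕ B`), let `Q` be a rewriting system on `B`, and let
`E = {(φ(a), a) : a ∈ A}` on the alphabet `{x,y} ∪ B`.  Then `(B, Q)` is
complete if and only if `({x,y} ∪ B, Q ∪ E)` is complete. -/
theorem stmt_16 {B : Type*} [Fintype B] (n : ℕ) (incl : Fin n → B)
    (hincl : Function.Injective incl) (Q : Set (List B × List B)) :
    (Terminating Q ∧ Confluent Q) ↔
      (Terminating
          ({q : List (XY ⊕ B) × List (XY ⊕ B) |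
              ∃ p ∈ Q, q = (p.1.map Sum.inr, p.2.map Sum.inr)} ∪
           {q : List (XY ⊕ B) × List (XY ⊕ B) |
              ∃ i : Fin n, q = ((code n i).map Sum.inl, [Sum.inr (incl i)])}) ∧
       Confluent
          ({q : List (XY ⊕ B) × List (XY ⊕ B) |
              ∃ p ∈ Q, q = (p.1.map Sum.inr, p.2.map Sum.inr)} ∪
           {q : List (XY ⊕ B) × List (XY ⊕ B) |
              ∃ i : Fin n, q = ((code n i).map Sum.inl, [Sum.inr (incl i)])})) := by
  constructor
  · rintro ⟨hTQ, hCQ⟩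
    have hT : Terminating (QL Q ∪ EL n incl) := term_forward hTQ
    refine ⟨hT, ?_⟩
    intro u v w huv huw
    exact newman (term_wf hT) (local_conf hTQ hCQ) u v w huv huw
  · rintro ⟨hTR, hCR⟩
    have hTR' : Terminating (QL Q ∪ EL n incl) := hTR
    have hCR' : Confluent (QL Q ∪ EL n incl) := hCR
    constructor
    · rintro ⟨f, hf⟩
      exact hTR' ⟨fun k => (f k).map Sum.inr, fun k => step_lift (hf k)⟩
    · intro u v w huv huw
      have hv := Relation.ReflTransGen.lift (fun t : List B => t.map Sum.inr)
        (fun _ _ hs => step_lift (n := n) (incl := incl) hs) _ _ huv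
      have hw := Relation.ReflTransGen.lift (fun t : List B => t.map Sum.inr)
        (fun _ _ hs => step_lift (n := n) (incl := incl) hs) _ _ huw
      obtain ⟨z, hz1, hz2⟩ := hCR' _ _ _ hv hw
      obtain ⟨z1, rfl, hq1⟩ := rtg_of_inr hz1
      obtain ⟨z2, he, hq2⟩ := rtg_of_inr hz2
      have hzz : z2 = z1 :=
        List.map_injective_iff.mpr Sum.inr_injective he.symm
      exact ⟨z1, hq1, hzz ▸ hq2⟩
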